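/- Fix a real m ≠ 0. There exist real constants c₁ and c₂, independent of q, such that for every real q > 1: c₁ + ∫₁^∞ (2/l)·q^{−2l²} dl ≤ δ_loop(q) ≤ c₂ + ∫₁^∞ (2/l)·q^{−2l²} dl (in particular the integral ∫₁^∞ (2/l)·q^{−2l²} dl is finite for every q > 1). -/

import Mathlib

set_option maxHeartbeats 1600000

open MeasureTheory

section DLhelpers
open Real

theorem DL.ineqB' (t : ℝ) : exp t - exp (-t) ≤ 2*t*exp t := by
  have h1 : exp (-t) = exp t * exp (-2*t) := by rw [← exp_add]; ring_nf
  nlinarith [add_one_le_exp (-2*t), exp_pos t]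

theorem DL.ineqA' (t : ℝ) (ht : 0 ≤ t) : 2*t ≤ exp t - exp (-t) := by
  rcases eq_or_lt_of_le ht with h | h
  · simp [← h]
  · have := Real.self_lt_sinh_iff.mpr h
    rw [Real.sinh_eq] at this
    linarith

theorem DL.claimA (ε L m : ℝ) (hε : 0 < ε) (hL : 1 ≤ L) :
    ((exp ((2*L+1)*ε) - exp (-((2*L+1)*ε))) * (exp ε - exp (-ε)) * exp (-((2*L^2+2*L)*ε))) /
      ((exp (L*ε) - exp (-(L*ε))) * (exp ((L+1)*ε) - exp (-((L+1)*ε)))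
        + m^2 * (exp ε - exp (-ε))^2)
    ≤ (2/L) * exp ((2-2*L^2)*ε) := by
  have hL0 : (0:ℝ) < L := by linarith
  set X := exp (-((2*L^2+2*L)*ε)) with hX
  have hX0 : 0 < X := exp_pos _
  have h1l : 2*ε ≤ exp ε - exp (-ε) := by simpa using DL.ineqA' ε hε.le
  have h1u : exp ε - exp (-ε) ≤ 2*ε*exp ε := DL.ineqB' ε
  have h2l : 2*((2*L+1)*ε) ≤ exp ((2*L+1)*ε) - exp (-((2*L+1)*ε)) :=
    DL.ineqA' _ (by positivity)
  have h2u : exp ((2*L+1)*ε) - exp (-((2*L+1)*ε)) ≤ 2*((2*L+1)*ε)*exp ((2*L+1)*ε) :=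
    DL.ineqB' _
  have h3l : 2*(L*ε) ≤ exp (L*ε) - exp (-(L*ε)) := DL.ineqA' _ (by positivity)
  have h4l : 2*((L+1)*ε) ≤ exp ((L+1)*ε) - exp (-((L+1)*ε)) := DL.ineqA' _ (by positivity)
  have hden_low : 4*(L*(L+1))*ε^2 ≤
      (exp (L*ε) - exp (-(L*ε))) * (exp ((L+1)*ε) - exp (-((L+1)*ε)))
        + m^2 * (exp ε - exp (-ε))^2 := by
    have := mul_le_mul h3l h4l (by positivity) (by nlinarith)
    nlinarith [sq_nonneg (m * (exp ε - exp (-ε)))]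
  have hden_pos : 0 < (exp (L*ε) - exp (-(L*ε))) * (exp ((L+1)*ε) - exp (-((L+1)*ε)))
        + m^2 * (exp ε - exp (-ε))^2 := by nlinarith
  have hexp_comb : exp ((2*L+1)*ε) * exp ε * X = exp ((2-2*L^2)*ε) := by
    rw [hX, ← exp_add, ← exp_add]; ring_nf
  have hnum_up : (exp ((2*L+1)*ε) - exp (-((2*L+1)*ε))) * (exp ε - exp (-ε)) * X ≤
      4*(2*L+1)*ε^2 * exp ((2-2*L^2)*ε) := by
    have hmul : (exp ((2*L+1)*ε) - exp (-((2*L+1)*ε))) * (exp ε - exp (-ε)) * X ≤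
        (2*((2*L+1)*ε)*exp ((2*L+1)*ε)) * (2*ε*exp ε) * X := by
      apply mul_le_mul_of_nonneg_right _ hX0.le
      exact mul_le_mul h2u h1u (by linarith) (by positivity)
    calc (exp ((2*L+1)*ε) - exp (-((2*L+1)*ε))) * (exp ε - exp (-ε)) * X
        ≤ (2*((2*L+1)*ε)*exp ((2*L+1)*ε)) * (2*ε*exp ε) * X := hmul
      _ = 4*(2*L+1)*ε^2 * (exp ((2*L+1)*ε) * exp ε * X) := by ring
      _ = 4*(2*L+1)*ε^2 * exp ((2-2*L^2)*ε) := by rw [hexp_comb]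
  calc ((exp ((2*L+1)*ε) - exp (-((2*L+1)*ε))) * (exp ε - exp (-ε)) * X) /
      ((exp (L*ε) - exp (-(L*ε))) * (exp ((L+1)*ε) - exp (-((L+1)*ε)))
        + m^2 * (exp ε - exp (-ε))^2)
      ≤ (4*(2*L+1)*ε^2 * exp ((2-2*L^2)*ε)) / (4*(L*(L+1))*ε^2) :=
        div_le_div₀ (by positivity) hnum_up (by positivity) hden_low
    _ ≤ (2/L) * exp ((2-2*L^2)*ε) := by
        rw [div_le_iff₀ (by positivity)]
        have h := exp_pos ((2-2*L^2)*ε)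
        have : (2/L) * exp ((2-2*L^2)*ε) * (4*(L*(L+1))*ε^2)
            = 8*(L+1)*ε^2 * exp ((2-2*L^2)*ε) := by field_simp; ring
        rw [this]
        nlinarith [mul_pos (mul_pos hε hε) h]

theorem DL.claimB (ε L m : ℝ) (hε : 0 < ε) (hL : 1 ≤ L) :
    (2/L) * exp (-(2*L^2)*ε) ≤
    ((exp ((2*L+1)*ε) - exp (-((2*L+1)*ε))) * (exp ε - exp (-ε)) * exp (-((2*L^2+2*L)*ε))) /
      ((exp (L*ε) - exp (-(L*ε))) * (exp ((L+1)*ε) - exp (-((L+1)*ε)))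
        + m^2 * (exp ε - exp (-ε))^2)
    + ((1+2*m^2)/L^2) * exp (-(2*L^2)*ε) + 10*ε*exp (-(2*L^2)*ε) := by
  have hL0 : (0:ℝ) < L := by linarith
  set X := exp (-((2*L^2+2*L)*ε)) with hX
  have hX0 : 0 < X := exp_pos _
  set X0 := exp (-(2*L^2)*ε) with hX0def
  have hX00 : 0 < X0 := exp_pos _
  set e := exp (-((4*L+1)*ε)) with he
  have he0 : 0 < e := exp_pos _
  have hee : 1 - (4*L+1)*ε ≤ e := by
    have := add_one_le_exp (-((4*L+1)*ε)); linarith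
  set D' := L*(L+1) + m^2 with hD'
  have hD'0 : 0 < D' := by nlinarith [sq_nonneg m]
  -- bounds on E's
  have h1l : 2*ε ≤ exp ε - exp (-ε) := by simpa using DL.ineqA' ε hε.le
  have h1u : exp ε - exp (-ε) ≤ 2*ε*exp ε := DL.ineqB' ε
  have h2l : 2*((2*L+1)*ε) ≤ exp ((2*L+1)*ε) - exp (-((2*L+1)*ε)) :=
    DL.ineqA' _ (by positivity)
  have h3u : exp (L*ε) - exp (-(L*ε)) ≤ 2*(L*ε)*exp (L*ε) := DL.ineqB' _
  have h4u : exp ((L+1)*ε) - exp (-((L+1)*ε)) ≤ 2*((L+1)*ε)*exp ((L+1)*ε) := DL.ineqB' _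
  have h3l : 2*(L*ε) ≤ exp (L*ε) - exp (-(L*ε)) := DL.ineqA' _ (by positivity)
  have h4l : 2*((L+1)*ε) ≤ exp ((L+1)*ε) - exp (-((L+1)*ε)) := DL.ineqA' _ (by positivity)
  -- denominator upper bound
  have hcomb1 : exp (L*ε) * exp ((L+1)*ε) = exp ((2*L+1)*ε) := by
    rw [← exp_add]; ring_nf
  have hcomb2 : exp ε * exp ε = exp (2*ε) := by rw [← exp_add]; ring_nf
  have hexple : exp (2*ε) ≤ exp ((2*L+1)*ε) := by
    apply exp_le_exp.mpr; nlinarith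
  have hden_up : (exp (L*ε) - exp (-(L*ε))) * (exp ((L+1)*ε) - exp (-((L+1)*ε)))
        + m^2 * (exp ε - exp (-ε))^2 ≤ 4*ε^2*D'*exp ((2*L+1)*ε) := by
    have hp1 : (exp (L*ε) - exp (-(L*ε))) * (exp ((L+1)*ε) - exp (-((L+1)*ε)))
        ≤ (2*(L*ε)*exp (L*ε)) * (2*((L+1)*ε)*exp ((L+1)*ε)) :=
      mul_le_mul h3u h4u (by nlinarith) (by positivity)
    have hp1' : (2*(L*ε)*exp (L*ε)) * (2*((L+1)*ε)*exp ((L+1)*ε))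
        = 4*ε^2*(L*(L+1))*exp ((2*L+1)*ε) := by
      rw [show (2*(L*ε)*exp (L*ε)) * (2*((L+1)*ε)*exp ((L+1)*ε))
        = 4*ε^2*(L*(L+1))*(exp (L*ε) * exp ((L+1)*ε)) by ring, hcomb1]
    have hp2 : m^2 * (exp ε - exp (-ε))^2 ≤ m^2 * (4*ε^2*exp ((2*L+1)*ε)) := by
      apply mul_le_mul_of_nonneg_left _ (sq_nonneg m)
      have hE1nn : 0 ≤ exp ε - exp (-ε) := by linarith
      have : (exp ε - exp (-ε))^2 ≤ (2*ε*exp ε)^2 :=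
        pow_le_pow_left₀ (by linarith) h1u 2
      calc (exp ε - exp (-ε))^2 ≤ (2*ε*exp ε)^2 := this
        _ = 4*ε^2*exp (2*ε) := by rw [← hcomb2]; ring
        _ ≤ 4*ε^2*exp ((2*L+1)*ε) := by nlinarith
    rw [hD']; nlinarith [hp1.trans hp1'.le]
  have hELpos : 0 < exp (L*ε) - exp (-(L*ε)) := by nlinarith
  have hEL1pos : 0 < exp ((L+1)*ε) - exp (-((L+1)*ε)) := by nlinarith
  have hE2L1nn : 0 ≤ exp ((2*L+1)*ε) - exp (-((2*L+1)*ε)) := by nlinarith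
  have hE1nn : 0 ≤ exp ε - exp (-ε) := by nlinarith
  have hden_pos : 0 < (exp (L*ε) - exp (-(L*ε))) * (exp ((L+1)*ε) - exp (-((L+1)*ε)))
        + m^2 * (exp ε - exp (-ε))^2 := by
    nlinarith [mul_pos hELpos hEL1pos, sq_nonneg (m*(exp ε - exp (-ε)))]
  -- numerator lower bound
  have hnum_low : 4*(2*L+1)*ε^2*X ≤
      (exp ((2*L+1)*ε) - exp (-((2*L+1)*ε))) * (exp ε - exp (-ε)) * X := by
    have : 2*((2*L+1)*ε) * (2*ε) ≤
        (exp ((2*L+1)*ε) - exp (-((2*L+1)*ε))) * (exp ε - exp (-ε)) :=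
      mul_le_mul h2l h1l (by positivity) (by linarith)
    nlinarith [mul_le_mul_of_nonneg_right this hX0.le]
  -- T lower bound
  have hT_low : ((2*L+1)/D') * (X0 * e) ≤
      ((exp ((2*L+1)*ε) - exp (-((2*L+1)*ε))) * (exp ε - exp (-ε)) * X) /
      ((exp (L*ε) - exp (-(L*ε))) * (exp ((L+1)*ε) - exp (-((L+1)*ε)))
        + m^2 * (exp ε - exp (-ε))^2) := by
    have hXe : X = X0 * e * exp ((2*L+1)*ε) := by
      rw [hX, hX0def, he, ← exp_add, ← exp_add]; ring_nf
    have step : (4*(2*L+1)*ε^2*X) / (4*ε^2*D'*exp ((2*L+1)*ε)) ≤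
        ((exp ((2*L+1)*ε) - exp (-((2*L+1)*ε))) * (exp ε - exp (-ε)) * X) /
        ((exp (L*ε) - exp (-(L*ε))) * (exp ((L+1)*ε) - exp (-((L+1)*ε)))
          + m^2 * (exp ε - exp (-ε))^2) :=
      div_le_div₀ (mul_nonneg (mul_nonneg hE2L1nn hE1nn) hX0.le) hnum_low hden_pos hden_up
    refine le_trans (le_of_eq ?_) step
    rw [hXe]
    field_simp
  -- scalar inequality
  have hB2 : (2*L+1)/D' ≤ 2/L := by
    rw [div_le_div_iff₀ hD'0 hL0, hD']
    nlinarith [sq_nonneg m]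
  have hB0 : 0 ≤ (2*L+1)/D' := by positivity
  have h2 : 2/L ≤ (2*L+1)/D' + (1+2*m^2)/L^2 := by
    have key : 2/L - (2*L+1)/D' = (L + 2*m^2)/(L*D') := by
      field_simp; ring
    have : (L + 2*m^2)/(L*D') ≤ (1+2*m^2)/L^2 := by
      rw [div_le_div_iff₀ (by positivity) (by positivity), hD']
      nlinarith [sq_nonneg m, sq_nonneg (m^2), mul_nonneg (sq_nonneg m) hL0.le,
        mul_nonneg (mul_nonneg (sq_nonneg m) (sq_nonneg m)) hL0.le,
        mul_nonneg (mul_nonneg (sq_nonneg m) hL0.le) hL0.le]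
    linarith
  have h1 : (2*L+1)/D' - 10*ε ≤ (2*L+1)/D' * e := by
    have e1 : (2*L+1)/D' * (1 - (4*L+1)*ε) ≤ (2*L+1)/D' * e :=
      mul_le_mul_of_nonneg_left hee hB0
    have e2 : (2*L+1)/D' * ((4*L+1)*ε) ≤ (2/L) * ((4*L+1)*ε) :=
      mul_le_mul_of_nonneg_right hB2 (by positivity)
    have e3 : (2/L) * ((4*L+1)*ε) ≤ 10*ε := by
      rw [show (2/L) * ((4*L+1)*ε) = (8 + 2/L)*ε by field_simp; ring]
      have : 2/L ≤ 2 := by rw [div_le_iff₀ hL0]; linarith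
      nlinarith
    nlinarith
  have hscalar : 2/L ≤ (2*L+1)/D' * e + (1+2*m^2)/L^2 + 10*ε := by linarith
  -- combine
  calc (2/L) * X0 ≤ ((2*L+1)/D' * e + (1+2*m^2)/L^2 + 10*ε) * X0 :=
        mul_le_mul_of_nonneg_right hscalar hX00.le
    _ = ((2*L+1)/D') * (X0 * e) + ((1+2*m^2)/L^2) * X0 + 10*ε*X0 := by ring
    _ ≤ _ := by
        have := hT_low
        gcongr <;> linarith [hT_low]

end DLhelpers
theorem DL.algid (a b c d x msq : ℝ) (hd : d ≠ 0) (h : b*c + msq*d^2 ≠ 0) :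
    (a/d) * x / ((b/d)*(c/d) + msq) = a*d*x/(b*c + msq*d^2) := by
  have h2 : (b/d)*(c/d) + msq = (b*c + msq*d^2)/d^2 := by field_simp
  rw [h2]
  rw [div_div_eq_mul_div, div_eq_div_iff (by positivity) h]
  field_simp

/-- The `q`-integer `[n]_q = (qⁿ − q⁻ⁿ)/(q − q⁻¹)`. -/
noncomputable def qint (q : ℝ) (n : ℕ) : ℝ := (q ^ (n : ℤ) - q ^ (-(n : ℤ))) / (q - q⁻¹)

/-- The loop sum `δ_loop(q) = Σ_{l=0}^∞ [2l+1]_q · q^{−2l(l+1)} / ([l]_q·[l+1]_q + m²)`. -/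
noncomputable def deltaLoop (q m : ℝ) : ℝ :=
  ∑' l : ℕ,
    qint q (2 * l + 1) * q ^ (-(2 * (l : ℤ) * ((l : ℤ) + 1))) /
      (qint q l * qint q (l + 1) + m ^ 2)

theorem deltaLoop_integral_bounds (m : ℝ) (hm : m ≠ 0) :
    ∃ c₁ c₂ : ℝ, ∀ q : ℝ, 1 < q →
      MeasureTheory.IntegrableOn (fun l : ℝ => (2 / l) * q ^ (-2 * l ^ 2)) (Set.Ici 1) ∧
      c₁ + ∫ l in Set.Ici (1 : ℝ), (2 / l) * q ^ (-2 * l ^ 2) ≤ deltaLoop q m ∧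
      deltaLoop q m ≤ c₂ + ∫ l in Set.Ici (1 : ℝ), (2 / l) * q ^ (-2 * l ^ 2) := by
  have hm2 : (0:ℝ) < m^2 := by positivity
  refine ⟨-(7 + 4*m^2), 4 + 1/m^2, fun q hq => ?_⟩
  have hq0 : (0:ℝ) < q := by linarith
  set ε := Real.log q with hεdef
  have hε : 0 < ε := Real.log_pos hq
  have hqe : Real.exp ε = q := Real.exp_log hq0
  set F : ℝ → ℝ := fun x => (2/x) * Real.exp (-(2*x^2)*ε) with hFdef
  have hfeq : (fun l : ℝ => 2 / l * q ^ (-2 * l ^ 2)) = F := by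
    funext x
    rw [hFdef, Real.rpow_def_of_pos hq0, ← hεdef]
    ring_nf
  have hzp : ∀ k : ℤ, q ^ k = Real.exp (k*ε) := by
    intro k
    rw [← Real.rpow_intCast q k, Real.rpow_def_of_pos hq0, ← hεdef, mul_comm]
  have hqint : ∀ k : ℕ, qint q k =
      (Real.exp ((k:ℝ)*ε) - Real.exp (-((k:ℝ)*ε)))/(Real.exp ε - Real.exp (-ε)) := by
    intro k
    rw [qint, hzp, hzp, ← hqe, ← Real.exp_neg]
    push_cast
    ring_nf
  have hEpos : ∀ x : ℝ, 0 < x → 0 < Real.exp (x*ε) - Real.exp (-(x*ε)) := by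
    intro x hx
    have : (-(x*ε)) < x*ε := by nlinarith
    have := Real.exp_lt_exp.mpr this
    linarith
  have hE1pos : 0 < Real.exp ε - Real.exp (-ε) := by
    have := hEpos 1 one_pos; rw [one_mul] at this; simpa using this
  set T : ℕ → ℝ := fun l => qint q (2*l+1) * q ^ (-(2*(l:ℤ)*((l:ℤ)+1))) /
      (qint q l * qint q (l+1) + m^2) with hTdef
  have hdelta : deltaLoop q m = ∑' l, T l := rfl
  have hterm : ∀ n : ℕ, T (n+1) =
      ((Real.exp ((2*((n:ℝ)+1)+1)*ε) - Real.exp (-((2*((n:ℝ)+1)+1)*ε))) *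
        (Real.exp ε - Real.exp (-ε)) *
        Real.exp (-((2*((n:ℝ)+1)^2+2*((n:ℝ)+1))*ε))) /
      ((Real.exp (((n:ℝ)+1)*ε) - Real.exp (-(((n:ℝ)+1)*ε))) *
        (Real.exp ((((n:ℝ)+1)+1)*ε) - Real.exp (-((((n:ℝ)+1)+1)*ε)))
        + m^2 * (Real.exp ε - Real.exp (-ε))^2) := by
    intro n
    simp only [hTdef]
    have c1 : ((2*(n+1)+1:ℕ):ℝ) = 2*((n:ℝ)+1)+1 := by push_cast; ring
    have c2 : ((n+1:ℕ):ℝ) = (n:ℝ)+1 := by push_cast; ring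
    have c3 : ((n+1+1:ℕ):ℝ) = ((n:ℝ)+1)+1 := by push_cast; ring
    have c4 : ((-(2*((n+1:ℕ):ℤ)*(((n+1:ℕ):ℤ)+1)):ℤ):ℝ)*ε
        = -((2*((n:ℝ)+1)^2+2*((n:ℝ)+1))*ε) := by push_cast; ring
    rw [hqint, hqint, hqint, hzp, c4, c1, c2, c3]
    have hd : Real.exp ε - Real.exp (-ε) ≠ 0 := ne_of_gt hE1pos
    have hb : 0 < Real.exp (((n:ℝ)+1)*ε) - Real.exp (-(((n:ℝ)+1)*ε)) :=
      hEpos _ (by positivity)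
    have hc : 0 < Real.exp ((((n:ℝ)+1)+1)*ε) - Real.exp (-((((n:ℝ)+1)+1)*ε)) :=
      hEpos _ (by positivity)
    have h : (Real.exp (((n:ℝ)+1)*ε) - Real.exp (-(((n:ℝ)+1)*ε))) *
          (Real.exp ((((n:ℝ)+1)+1)*ε) - Real.exp (-((((n:ℝ)+1)+1)*ε)))
          + m^2 * (Real.exp ε - Real.exp (-ε))^2 ≠ 0 := by positivity
    exact DL.algid _ _ _ _ _ _ hd h
  have hqne : q - q⁻¹ ≠ 0 := by
    rw [← hqe, ← Real.exp_neg]; exact ne_of_gt hE1pos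
  have hT0 : T 0 = 1/m^2 := by
    have h1 : qint q 0 = 0 := by simp [qint]
    have h2 : qint q 1 = 1 := by
      simp only [qint, Nat.cast_one, zpow_one]
      rw [show ((-1:ℤ)) = -1 from rfl, zpow_neg, zpow_one]
      exact div_self hqne
    rw [hTdef]
    simp only [Nat.cast_zero, mul_zero, zero_add, mul_one, zero_mul, neg_zero, zpow_zero, h1, h2]
  -- geometric ratio
  set r : ℝ := Real.exp (-(2*ε)) with hrdef
  have hr0 : 0 < r := Real.exp_pos _
  have hr1 : r < 1 := by
    rw [hrdef, ← Real.exp_zero]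
    exact Real.exp_lt_exp.mpr (by linarith)
  have hrpow : ∀ n : ℕ, r^n = Real.exp (-(2*ε)*(n:ℝ)) := by
    intro n
    rw [hrdef, ← Real.exp_nat_mul]
    ring_nf
  set g : ℕ → ℝ := fun n => F ((n:ℝ)+1) with hgdef
  have hg_nonneg : ∀ n, 0 ≤ g n := by
    intro n
    rw [hgdef, hFdef]
    positivity
  have hgn_le : ∀ n : ℕ, g n ≤ 2*r^(n+1) := by
    intro n
    have hn0 : (0:ℝ) ≤ (n:ℝ) := Nat.cast_nonneg n
    have h1 : (2:ℝ)/((n:ℝ)+1) ≤ 2 := by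
      rw [div_le_iff₀ (by positivity)]; nlinarith
    have h2 : Real.exp (-(2*((n:ℝ)+1)^2)*ε) ≤ r^(n+1) := by
      rw [hrpow (n+1)]; push_cast
      refine Real.exp_le_exp.mpr ?_
      nlinarith [mul_nonneg hn0 hε.le, mul_nonneg (mul_nonneg hn0 hn0) hε.le]
    calc g n = (2/((n:ℝ)+1)) * Real.exp (-(2*((n:ℝ)+1)^2)*ε) := by rw [hgdef]
      _ ≤ 2 * r^(n+1) := mul_le_mul h1 h2 (Real.exp_pos _).le (by norm_num)
  have hgeo_sum : Summable (fun n : ℕ => r^n) := summable_geometric_of_lt_one hr0.le hr1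
  have hg_sum : Summable g :=
    Summable.of_nonneg_of_le hg_nonneg hgn_le
      ((hgeo_sum.mul_left (2*r)).congr (fun n => by rw [pow_succ]; ring))
  have ht_nonneg : ∀ n : ℕ, 0 ≤ T (n+1) := by
    intro n
    rw [hterm n]
    apply div_nonneg
    · exact mul_nonneg (mul_nonneg (hEpos _ (by positivity)).le hE1pos.le)
        (Real.exp_pos _).le
    · exact add_nonneg (mul_nonneg (hEpos _ (by positivity)).le
        (hEpos _ (by positivity)).le) (by positivity)
  have ht_le : ∀ n : ℕ, T (n+1) ≤ g n + (2*(1-r))*r^n := by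
    intro n
    have hn0 : (0:ℝ) ≤ (n:ℝ) := Nat.cast_nonneg n
    have hL : (1:ℝ) ≤ (n:ℝ)+1 := by linarith
    have hclaim := DL.claimA ε ((n:ℝ)+1) m hε hL
    rw [hterm n]
    refine le_trans hclaim ?_
    have hgn : g n = (2/((n:ℝ)+1)) * Real.exp (-(2*((n:ℝ)+1)^2)*ε) := by rw [hgdef]
    rw [hgn]
    set A := Real.exp (-(2*((n:ℝ)+1)^2)*ε) with hA
    set B := Real.exp (2*ε) with hB
    set C := Real.exp (-(2*((n:ℝ)+1))*ε) with hC
    have hA0 : 0 < A := Real.exp_pos _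
    have hC0 : 0 < C := Real.exp_pos _
    have hB1 : 1 ≤ B := by
      rw [hB, ← Real.exp_zero]; exact Real.exp_le_exp.mpr (by nlinarith)
    have hsplit : Real.exp ((2-2*((n:ℝ)+1)^2)*ε) = A * B := by
      rw [hA, hB, ← Real.exp_add]; ring_nf
    have hAC : A ≤ C := by
      rw [hA, hC]
      refine Real.exp_le_exp.mpr ?_
      nlinarith [mul_nonneg hn0 hε.le, mul_nonneg (mul_nonneg hn0 hn0) hε.le]
    have h2L : 2/((n:ℝ)+1) ≤ 2 := by
      rw [div_le_iff₀ (by positivity)]; nlinarith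
    have h2L0 : (0:ℝ) ≤ 2/((n:ℝ)+1) := by positivity
    have hrn : r^n = C * B := by
      rw [hrpow n, hC, hB, ← Real.exp_add]; ring_nf
    have hrn1 : r^(n+1) = C := by
      rw [hrpow (n+1), hC]; push_cast; ring_nf
    have hfin : (2*(1-r))*r^n = 2*C*(B-1) := by
      have h1 : r*r^n = r^(n+1) := by rw [pow_succ]; ring
      calc (2*(1-r))*r^n = 2*r^n - 2*(r*r^n) := by ring
        _ = 2*(C*B) - 2*C := by rw [h1, hrn, hrn1]
        _ = 2*C*(B-1) := by ring
    have key : (2/((n:ℝ)+1))*A ≤ 2*C := mul_le_mul h2L hAC hA0.le (by norm_num)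
    calc (2/((n:ℝ)+1)) * Real.exp ((2-2*((n:ℝ)+1)^2)*ε) = (2/((n:ℝ)+1))*A*B := by
          rw [hsplit]; ring
      _ = (2/((n:ℝ)+1))*A + ((2/((n:ℝ)+1))*A)*(B-1) := by ring
      _ ≤ (2/((n:ℝ)+1))*A + (2*C)*(B-1) := by
          have := mul_le_mul_of_nonneg_right key (sub_nonneg.mpr hB1)
          linarith
      _ = (2/((n:ℝ)+1))*A + (2*(1-r))*r^n := by rw [hfin]
  have ht_sum : Summable (fun n => T (n+1)) :=
    Summable.of_nonneg_of_le ht_nonneg ht_le (hg_sum.add (hgeo_sum.mul_left (2*(1-r))))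
  have hu_def : True := trivial
  have hg_le_t : ∀ n : ℕ, g n ≤ T (n+1) + ((1+2*m^2)*(1/((n:ℝ)+1)^2) + (10*ε*r)*r^n) := by
    intro n
    have hn0 : (0:ℝ) ≤ (n:ℝ) := Nat.cast_nonneg n
    have hL : (1:ℝ) ≤ (n:ℝ)+1 := by linarith
    have hclaim := DL.claimB ε ((n:ℝ)+1) m hε hL
    rw [← hterm n] at hclaim
    have hgn : g n = (2/((n:ℝ)+1)) * Real.exp (-(2*((n:ℝ)+1)^2)*ε) := by rw [hgdef]
    rw [hgn]
    refine le_trans hclaim ?_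
    have hX0le1 : Real.exp (-(2*((n:ℝ)+1)^2)*ε) ≤ 1 := by
      rw [Real.exp_le_one_iff]
      nlinarith [mul_nonneg hn0 hε.le, mul_nonneg (mul_nonneg hn0 hn0) hε.le]
    have hX0C : Real.exp (-(2*((n:ℝ)+1)^2)*ε) ≤ r^(n+1) := by
      rw [hrpow (n+1)]; push_cast
      refine Real.exp_le_exp.mpr ?_
      nlinarith [mul_nonneg hn0 hε.le, mul_nonneg (mul_nonneg hn0 hn0) hε.le]
    have ha : ((1+2*m^2)/((n:ℝ)+1)^2) * Real.exp (-(2*((n:ℝ)+1)^2)*ε)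
        ≤ (1+2*m^2)*(1/((n:ℝ)+1)^2) := by
      rw [div_eq_mul_one_div]
      exact mul_le_of_le_one_right (by positivity) hX0le1
    have hb : 10*ε*Real.exp (-(2*((n:ℝ)+1)^2)*ε) ≤ (10*ε*r)*r^n := by
      calc 10*ε*Real.exp (-(2*((n:ℝ)+1)^2)*ε) ≤ 10*ε*r^(n+1) :=
            mul_le_mul_of_nonneg_left hX0C (by positivity)
        _ = (10*ε*r)*r^n := by rw [pow_succ]; ring
    linarith
  have hbasel_sum : Summable (fun n : ℕ => (1:ℝ)/((n:ℝ)+1)^2) :=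
    ((summable_nat_add_iff 1).mpr hasSum_zeta_two.summable).congr
      (fun n => by push_cast; ring)
  have hbasel : ∑' n : ℕ, (1:ℝ)/((n:ℝ)+1)^2 ≤ 2 := by
    have hsplit := Summable.tsum_eq_zero_add hasSum_zeta_two.summable
    rw [hasSum_zeta_two.tsum_eq] at hsplit
    have hpi : Real.pi^2/6 ≤ 2 := by
      nlinarith [Real.pi_gt_three, Real.pi_lt_d2]
    have heq2 : ∑' n : ℕ, (1:ℝ)/((n:ℝ)+1)^2 = ∑' n : ℕ, (1:ℝ)/(((n+1:ℕ)):ℝ)^2 :=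
      tsum_congr (fun n => by norm_num)
    rw [heq2]
    have h0 : (1:ℝ)/(((0:ℕ)):ℝ)^2 = 0 := by norm_num
    rw [h0] at hsplit
    linarith
  have hgeo : ∑' n : ℕ, r^n = (1-r)⁻¹ := tsum_geometric_of_lt_one hr0.le hr1
  have hεr : ε*r ≤ (1-r)/2 := by
    have h1 : 2*ε + 1 ≤ Real.exp (2*ε) := Real.add_one_le_exp _
    have h2 : r * Real.exp (2*ε) = 1 := by
      rw [hrdef, ← Real.exp_add]; norm_num
    nlinarith [mul_le_mul_of_nonneg_left h1 hr0.le]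
  have hSSt_up : ∑' n, T (n+1) ≤ (∑' n, g n) + 2 := by
    have hh_sum : Summable (fun n : ℕ => (2*(1-r))*r^n) := hgeo_sum.mul_left _
    have h1r : (1:ℝ) - r ≠ 0 := by linarith
    calc ∑' n, T (n+1) ≤ ∑' n, (g n + (2*(1-r))*r^n) :=
          Summable.tsum_le_tsum ht_le ht_sum (hg_sum.add hh_sum)
      _ = (∑' n, g n) + ∑' n : ℕ, (2*(1-r))*r^n := Summable.tsum_add hg_sum hh_sum
      _ = (∑' n, g n) + 2 := by
          rw [tsum_mul_left, hgeo, mul_assoc, mul_inv_cancel₀ h1r, mul_one]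
  have hSSg_low : ∑' n, g n ≤ (∑' n, T (n+1)) + (7+4*m^2) := by
    have hu1 : Summable (fun n : ℕ => (1+2*m^2)*(1/((n:ℝ)+1)^2)) :=
      hbasel_sum.mul_left _
    have hu2 : Summable (fun n : ℕ => (10*ε*r)*r^n) := hgeo_sum.mul_left _
    have hu_sum : Summable (fun n : ℕ => (1+2*m^2)*(1/((n:ℝ)+1)^2) + (10*ε*r)*r^n) :=
      hu1.add hu2
    have h1 : ∑' n, g n ≤ ∑' n, (T (n+1) + ((1+2*m^2)*(1/((n:ℝ)+1)^2) + (10*ε*r)*r^n)) :=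
      Summable.tsum_le_tsum hg_le_t hg_sum (ht_sum.add hu_sum)
    have h2 : ∑' n, (T (n+1) + ((1+2*m^2)*(1/((n:ℝ)+1)^2) + (10*ε*r)*r^n))
        = (∑' n, T (n+1)) + ∑' n : ℕ, ((1+2*m^2)*(1/((n:ℝ)+1)^2) + (10*ε*r)*r^n) :=
      Summable.tsum_add ht_sum hu_sum
    have h3 : ∑' n : ℕ, ((1+2*m^2)*(1/((n:ℝ)+1)^2) + (10*ε*r)*r^n)
        = (1+2*m^2)*(∑' n : ℕ, (1:ℝ)/((n:ℝ)+1)^2) + (10*ε*r)*(1-r)⁻¹ := by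
      rw [Summable.tsum_add hu1 hu2, tsum_mul_left, tsum_mul_left, hgeo]
    have h1r : (0:ℝ) < 1 - r := by linarith
    have h4 : (10*ε*r)*(1-r)⁻¹ ≤ 5 := by
      rw [show (10*ε*r)*(1-r)⁻¹ = (10*(ε*r))/(1-r) by ring, div_le_iff₀ h1r]
      nlinarith [hεr]
    have h5 : (1+2*m^2)*(∑' n : ℕ, (1:ℝ)/((n:ℝ)+1)^2) ≤ (1+2*m^2)*2 :=
      mul_le_mul_of_nonneg_left hbasel (by positivity)
    nlinarith [h1, h2, h3]
  -- integral side
  have hF_int : MeasureTheory.IntegrableOn F (Set.Ici 1) := by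
    rw [integrableOn_Ici_iff_integrableOn_Ioi]
    have hc : ContinuousOn F (Set.Ioi 1) := by
      rw [hFdef]
      apply ContinuousOn.mul
      · apply ContinuousOn.div continuousOn_const continuousOn_id
        intro x hx
        exact ne_of_gt (lt_trans one_pos hx)
      · apply Continuous.continuousOn
        exact Real.continuous_exp.comp
          (((continuous_const.mul (continuous_pow 2)).neg).mul continuous_const)
    have hmeas : MeasureTheory.AEStronglyMeasurable F
        (MeasureTheory.volume.restrict (Set.Ioi 1)) :=
      hc.aestronglyMeasurable measurableSet_Ioi
    apply MeasureTheory.Integrable.mono'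
      ((exp_neg_integrableOn_Ioi 1 (show (0:ℝ) < 2*ε by positivity)).const_mul 2) hmeas
    filter_upwards [MeasureTheory.ae_restrict_mem measurableSet_Ioi] with x hx
    have hx1 : (1:ℝ) < x := hx
    have hx0 : (0:ℝ) < x := by linarith
    have hFx : F x = (2/x) * Real.exp (-(2*x^2)*ε) := by rw [hFdef]
    rw [Real.norm_eq_abs, abs_of_nonneg (by rw [hFx]; positivity), hFx]
    have h1 : 2/x ≤ 2 := by rw [div_le_iff₀ hx0]; nlinarith
    have h2 : Real.exp (-(2*x^2)*ε) ≤ Real.exp (-(2*ε)*x) := by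
      refine Real.exp_le_exp.mpr ?_
      nlinarith [mul_le_mul_of_nonneg_right
        (mul_self_le_mul_self (by linarith : (0:ℝ) ≤ 1) hx1.le) hε.le, sq_nonneg x]
    exact mul_le_mul h1 h2 (Real.exp_pos _).le (by norm_num)
  have hF_mono : ∀ a b : ℝ, 1 ≤ a → a ≤ b → F b ≤ F a := by
    intro a b ha hab
    have ha0 : (0:ℝ) < a := by linarith
    have hb0 : (0:ℝ) < b := by linarith
    have h1 : (2:ℝ)/b ≤ 2/a := by
      apply div_le_div_of_nonneg_left (by norm_num) ha0 hab
    have h2 : Real.exp (-(2*b^2)*ε) ≤ Real.exp (-(2*a^2)*ε) := by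
      refine Real.exp_le_exp.mpr ?_
      nlinarith [mul_le_mul_of_nonneg_right
        (mul_self_le_mul_self (by linarith : (0:ℝ) ≤ a) hab) hε.le]
    calc F b = (2/b) * Real.exp (-(2*b^2)*ε) := by rw [hFdef]
      _ ≤ (2/a) * Real.exp (-(2*a^2)*ε) :=
          mul_le_mul h1 h2 (Real.exp_pos _).le (by positivity)
      _ = F a := by rw [hFdef]
  set p : ℕ → ℝ := fun n => ∫ x in Set.Ioc ((n:ℝ)+1) ((n:ℝ)+2), F x with hpdef
  have hunion : Set.Ioi (1:ℝ) = ⋃ n : ℕ, Set.Ioc ((n:ℝ)+1) ((n:ℝ)+2) := by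
    ext x
    simp only [Set.mem_Ioi, Set.mem_iUnion, Set.mem_Ioc]
    constructor
    · intro hx
      refine ⟨⌈x-2⌉₊, ?_, ?_⟩
      · rcases le_or_gt x 2 with h | h
        · have h0 : ⌈x-2⌉₊ = 0 := Nat.ceil_eq_zero.mpr (by linarith)
          rw [h0]; push_cast; linarith
        · have h1 : (⌈x-2⌉₊:ℝ) < (x-2)+1 := Nat.ceil_lt_add_one (by linarith)
          linarith
      · have := Nat.le_ceil (x-2); linarith
    · rintro ⟨n, h1, -⟩
      have : (0:ℝ) ≤ (n:ℝ) := Nat.cast_nonneg n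
      linarith
  have hdisj : Pairwise (Function.onFun Disjoint
      (fun n : ℕ => Set.Ioc ((n:ℝ)+1) ((n:ℝ)+2))) := by
    intro i j hij
    simp only [Function.onFun]
    apply Set.Ioc_disjoint_Ioc.mpr
    rcases lt_or_gt_of_ne hij with h | h
    · have hc : (i:ℝ) + 1 ≤ (j:ℝ) := by exact_mod_cast Nat.succ_le_of_lt h
      refine le_trans (min_le_left _ _) (le_trans ?_ (le_max_right _ _))
      linarith
    · have hc : (j:ℝ) + 1 ≤ (i:ℝ) := by exact_mod_cast Nat.succ_le_of_lt h
      refine le_trans (min_le_right _ _) (le_trans ?_ (le_max_left _ _))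
      linarith
  have hphs : HasSum p (∫ x in Set.Ioi 1, F x) := by
    have hFIoi : MeasureTheory.IntegrableOn F (Set.Ioi 1) :=
      hF_int.mono_set Set.Ioi_subset_Ici_self
    have h := MeasureTheory.hasSum_integral_iUnion
      (fun n : ℕ => measurableSet_Ioc) hdisj (by rw [← hunion]; exact hFIoi)
    rw [← hunion] at h
    exact h
  have hp_up : ∀ n, p n ≤ g n := by
    intro n
    have hn0 : (0:ℝ) ≤ (n:ℝ) := Nat.cast_nonneg n
    have h1L : (1:ℝ) ≤ (n:ℝ)+1 := by linarith
    have hsub : Set.Ioc ((n:ℝ)+1) ((n:ℝ)+2) ⊆ Set.Ici 1 :=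
      fun x hx => le_trans h1L hx.1.le
    have hint : MeasureTheory.IntegrableOn F (Set.Ioc ((n:ℝ)+1) ((n:ℝ)+2)) :=
      hF_int.mono_set hsub
    have hconst : MeasureTheory.IntegrableOn (fun _ => F ((n:ℝ)+1))
        (Set.Ioc ((n:ℝ)+1) ((n:ℝ)+2)) :=
      MeasureTheory.integrableOn_const measure_Ioc_lt_top.ne
    have hmono := MeasureTheory.setIntegral_mono_on hint hconst measurableSet_Ioc
      (fun x hx => hF_mono _ _ h1L hx.1.le)
    have hval : ∫ _x in Set.Ioc ((n:ℝ)+1) ((n:ℝ)+2), F ((n:ℝ)+1) = F ((n:ℝ)+1) := by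
      rw [MeasureTheory.setIntegral_const, Real.volume_real_Ioc]
      norm_num
    calc p n ≤ ∫ _x in Set.Ioc ((n:ℝ)+1) ((n:ℝ)+2), F ((n:ℝ)+1) := hmono
      _ = F ((n:ℝ)+1) := hval
      _ = g n := by rw [hgdef]
  have hp_low : ∀ n, g (n+1) ≤ p n := by
    intro n
    have hn0 : (0:ℝ) ≤ (n:ℝ) := Nat.cast_nonneg n
    have h1L : (1:ℝ) ≤ (n:ℝ)+1 := by linarith
    have hsub : Set.Ioc ((n:ℝ)+1) ((n:ℝ)+2) ⊆ Set.Ici 1 :=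
      fun x hx => le_trans h1L hx.1.le
    have hint : MeasureTheory.IntegrableOn F (Set.Ioc ((n:ℝ)+1) ((n:ℝ)+2)) :=
      hF_int.mono_set hsub
    have hconst : MeasureTheory.IntegrableOn (fun _ => F ((n:ℝ)+2))
        (Set.Ioc ((n:ℝ)+1) ((n:ℝ)+2)) :=
      MeasureTheory.integrableOn_const measure_Ioc_lt_top.ne
    have hmono := MeasureTheory.setIntegral_mono_on hconst hint measurableSet_Ioc
      (fun x hx => hF_mono _ _ (le_trans h1L hx.1.le) hx.2)
    have hval : ∫ _x in Set.Ioc ((n:ℝ)+1) ((n:ℝ)+2), F ((n:ℝ)+2) = F ((n:ℝ)+2) := by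
      rw [MeasureTheory.setIntegral_const, Real.volume_real_Ioc]
      norm_num
    have hgn1 : g (n+1) = F ((n:ℝ)+2) := by
      rw [hgdef]
      norm_num
      congr 1
      push_cast
      ring
    calc g (n+1) = F ((n:ℝ)+2) := hgn1
      _ = ∫ _x in Set.Ioc ((n:ℝ)+1) ((n:ℝ)+2), F ((n:ℝ)+2) := hval.symm
      _ ≤ p n := hmono
  have hIoi_le : ∫ x in Set.Ioi 1, F x ≤ ∑' n, g n := by
    rw [← hphs.tsum_eq]
    exact Summable.tsum_le_tsum hp_up hphs.summable hg_sum
  have hle_Ioi : ∑' n, g (n+1) ≤ ∫ x in Set.Ioi 1, F x := by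
    rw [← hphs.tsum_eq]
    exact Summable.tsum_le_tsum hp_low ((summable_nat_add_iff 1).mpr hg_sum) hphs.summable
  have hg_split : ∑' n, g n = g 0 + ∑' n, g (n+1) := Summable.tsum_eq_zero_add hg_sum
  have hg0 : g 0 ≤ 2 := by
    have hexp1 : Real.exp (-(2*(((0:ℕ):ℝ)+1)^2)*ε) ≤ 1 := by
      rw [Real.exp_le_one_iff]; push_cast; nlinarith
    calc g 0 = (2/(((0:ℕ):ℝ)+1)) * Real.exp (-(2*(((0:ℕ):ℝ)+1)^2)*ε) := by rw [hgdef]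
      _ ≤ (2/(((0:ℕ):ℝ)+1)) * 1 :=
          mul_le_mul_of_nonneg_left hexp1 (by positivity)
      _ ≤ 2 := by norm_num
  have hSSg_up : ∑' n, g n ≤ 2 + ∫ x in Set.Ioi 1, F x := by
    rw [hg_split]; linarith
  have hT_sum_all : Summable T := (summable_nat_add_iff 1).mp ht_sum
  have hdelta_split : deltaLoop q m = T 0 + ∑' n, T (n+1) := by
    rw [hdelta, Summable.tsum_eq_zero_add hT_sum_all]
  have hIci : ∫ x in Set.Ici (1:ℝ), F x = ∫ x in Set.Ioi (1:ℝ), F x :=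
    MeasureTheory.integral_Ici_eq_integral_Ioi
  have hSSt_low : (∫ x in Set.Ioi 1, F x) - (7+4*m^2) ≤ ∑' n, T (n+1) := by linarith
  refine ⟨by rw [hfeq]; exact hF_int, ?_, ?_⟩
  · rw [hfeq]
    simp only [hIci]
    rw [hdelta_split, hT0]
    have h0 : 0 ≤ 1/m^2 := by positivity
    linarith
  · rw [hfeq]
    simp only [hIci]
    rw [hdelta_split, hT0]
    linarith
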